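/- Let M be a matroid of rank 2 on [n] = {1, …, n} whose cyclic flats form a chain under inclusion (any two cyclic flats of M are comparable by inclusion). Then M is isomorphic to the rank-2 Schubert matroid S(a,b) for some integers 1 ≤ a < b ≤ n. -/

import Mathlib

namespace PaperPOAM

variable {α : Type*}

/-- A circuit of a matroid: a minimal dependent set. -/
def IsCircuit (M : Matroid α) (C : Set α) : Prop :=
  M.Dep C ∧ ∀ D, D ⊂ C → ¬ M.Dep D

/-- A loop of a matroid: an element whose singleton is dependent. -/
def IsLoop (M : Matroid α) (e : α) : Prop := M.Dep {e}

/-- The set of loops of a matroid. -/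
def loops (M : Matroid α) : Set α := {e | IsLoop M e}

/-- A coloop: an element of the ground set contained in every base. -/
def IsColoop (M : Matroid α) (e : α) : Prop := e ∈ M.E ∧ ∀ B, M.IsBase B → e ∈ B

/-- A cyclic flat: a flat that is a union of circuits, i.e. a flat each of whose
elements lies in a circuit contained in the flat. -/
def IsCyclicFlat (M : Matroid α) (F : Set α) : Prop :=
  M.IsFlat F ∧ ∀ e ∈ F, ∃ C, IsCircuit M C ∧ C ⊆ F ∧ e ∈ C

/-- The rank of a set in a matroid: the largest size of an independent subset. -/
noncomputable def rkOf (M : Matroid α) (X : Set α) : ℕ :=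
  sSup {n | ∃ I, M.Indep I ∧ I ⊆ X ∧ I.ncard = n}

/-- The matroid has rank `r`: every base has `r` elements. -/
def RankEq (M : Matroid α) (r : ℕ) : Prop := ∀ B, M.IsBase B → B.ncard = r

/-- Two matroids are isomorphic: there is a bijection between the ground sets carrying
the bases of one exactly onto the bases of the other. -/
def MatroidIso (M N : Matroid α) : Prop :=
  ∃ f : α → α, Set.BijOn f M.E N.E ∧ ∀ B, B ⊆ M.E → (M.IsBase B ↔ N.IsBase (f '' B))

/-- `M` is the rank-2 Schubert matroid `S(a,b)` on `{1,…,n}`: its bases are exactly the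
two-element subsets `{i,j}` of `{1,…,n}` with `i < j`, `a ≤ i`, `b ≤ j`. -/
def IsSchubert2 (n a b : ℕ) (M : Matroid ℕ) : Prop :=
  M.E = Set.Icc 1 n ∧
  ∀ B, M.IsBase B ↔ ∃ i j, i < j ∧ a ≤ i ∧ b ≤ j ∧ 1 ≤ i ∧ j ≤ n ∧ B = ({i, j} : Set ℕ)

/-- `M` is the rank-3 Schubert matroid `S(a,b,c)` on `{1,…,n}`: its bases are exactly the
three-element subsets `{i,j,k}` of `{1,…,n}` with `i < j < k`, `a ≤ i`, `b ≤ j`, `c ≤ k`. -/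
def IsSchubert3 (n a b c : ℕ) (M : Matroid ℕ) : Prop :=
  M.E = Set.Icc 1 n ∧
  ∀ B, M.IsBase B ↔ ∃ i j k, i < j ∧ j < k ∧ a ≤ i ∧ b ≤ j ∧ c ≤ k ∧ 1 ≤ i ∧ k ≤ n ∧
    B = ({i, j, k} : Set ℕ)

end PaperPOAM

section Helpers
open Set
namespace PaperPOAM

variable {α : Type*} {M : Matroid α} {x y : α}

lemma nonloop_iff : M.Indep {x} ↔ x ∈ M.E \ M.closure ∅ := by
  have := M.empty_indep.insert_indep_iff (e := x)
  simpa using this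

lemma pair_indep_iff (hy : M.Indep {y}) (hxy : x ≠ y) :
    M.Indep {x, y} ↔ x ∈ M.E \ M.closure {y} := by
  rw [show ({x, y} : Set α) = insert x {y} from rfl,
    hy.insert_indep_iff_of_notMem (by simp [hxy])]

lemma mem_closure_swap (hy : M.Indep {y}) (h : y ∈ M.closure {x}) : x ∈ M.closure {y} := by
  have h2 := Matroid.closure_exchange (M := M) (e := y) (f := x) (X := ∅)
    ⟨by simpa using h, (nonloop_iff.mp hy).2⟩
  simpa using h2.1

lemma flat_closure (M : Matroid α) (X : Set α) : M.IsFlat (M.closure X) := by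
  rw [Matroid.closure_def]
  have hne : Nonempty {F // M.IsFlat F ∧ X ∩ M.E ⊆ F} :=
    ⟨⟨M.E, M.ground_isFlat, Set.inter_subset_right⟩⟩
  have h := Matroid.IsFlat.iInter (M := M)
    (Fs := fun F : {F // M.IsFlat F ∧ X ∩ M.E ⊆ F} => F.1) (fun F => F.2.1)
  convert h using 1
  rw [Set.sInter_eq_iInter]
  rfl

lemma loop_circuit (h : x ∈ M.closure ∅) : IsCircuit M {x} := by
  have hxE : x ∈ M.E := M.closure_subset_ground ∅ h
  refine ⟨⟨fun hI => (nonloop_iff.mp hI).2 h, by simpa⟩, fun D hD => ?_⟩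
  rw [Set.ssubset_singleton_iff] at hD
  subst hD
  exact fun hd => hd.1 M.empty_indep

lemma pair_circuit (hx : M.Indep {x}) (hy : M.Indep {y}) (hne : x ≠ y)
    (h : y ∈ M.closure {x}) : IsCircuit M {x, y} := by
  have hxE : x ∈ M.E := hx.subset_ground rfl
  have hyE : y ∈ M.E := hy.subset_ground rfl
  have hdep : ¬ M.Indep {x, y} := by
    rw [pair_indep_iff hy hne]
    exact fun h2 => h2.2 (mem_closure_swap hy h)
  refine ⟨⟨hdep, Set.insert_subset_iff.mpr ⟨hxE, by simpa using hyE⟩⟩, fun D hD hPd => ?_⟩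
  have hsub := hD.subset
  by_cases hxD : x ∈ D
  · by_cases hyD : y ∈ D
    · exact hD.ne (hsub.antisymm (by simp [insert_subset_iff, hxD, hyD]))
    · have : D ⊆ {x} := fun z hz => by
        rcases hsub hz with h1 | h1
        · exact h1
        · exact absurd (h1 ▸ hz) hyD
      exact hPd.1 (hx.subset this)
  · have : D ⊆ {y} := fun z hz => by
      rcases hsub hz with h1 | h1
      · exact absurd (h1 ▸ hz) hxD
      · exact h1
    exact hPd.1 (hy.subset this)

lemma closure_cyclic (hx : M.Indep {x}) (hx' : M.Indep {y}) (hne : x ≠ y)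
    (hpar : y ∈ M.closure {x}) : IsCyclicFlat M (M.closure {x}) := by
  refine ⟨flat_closure _ _, fun g hg => ?_⟩
  have hxP : x ∈ M.closure {x} := M.mem_closure_self x (hx.subset_ground rfl)
  by_cases hgl : g ∈ M.closure ∅
  · exact ⟨{g}, loop_circuit hgl, by
      simpa using M.closure_subset_closure (Set.empty_subset {x}) hgl, rfl⟩
  · have hgnl : M.Indep {g} := nonloop_iff.mpr ⟨M.closure_subset_ground _ hg, hgl⟩
    by_cases hgx : g = x
    · subst hgx
      exact ⟨{g, y}, pair_circuit hx hx' hne hpar,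
        by simp [insert_subset_iff, hxP, hpar], by simp⟩
    · exact ⟨{x, g}, pair_circuit hx hgnl (fun h => hgx h.symm) hg,
        by simp [insert_subset_iff, hxP, hg], by simp⟩

lemma exists_bijOn {A B : Set ℕ} (hA : A.Finite) (hB : B.Finite) (h : A.ncard = B.ncard) :
    ∃ f : ℕ → ℕ, Set.BijOn f A B := by
  classical
  have hcard : hA.toFinset.card = hB.toFinset.card := by
    rwa [← Set.ncard_eq_toFinset_card _ hA, ← Set.ncard_eq_toFinset_card _ hB]
  let e := Finset.equivOfCardEq hcard
  refine ⟨fun x => if hx : x ∈ hA.toFinset then (e ⟨x, hx⟩ : ℕ) else 0, ?_, ?_, ?_⟩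
  · intro x hx
    simp only [dif_pos (hA.mem_toFinset.mpr hx)]
    exact hB.mem_toFinset.mp (e ⟨x, _⟩).2
  · intro x hx y hy hxy
    simp only [dif_pos (hA.mem_toFinset.mpr hx), dif_pos (hA.mem_toFinset.mpr hy)] at hxy
    have := e.injective (Subtype.coe_injective hxy)
    simpa using this
  · intro b hb
    obtain ⟨a, ha⟩ := e.surjective ⟨b, hB.mem_toFinset.mpr hb⟩
    refine ⟨a.1, hA.mem_toFinset.mp a.2, ?_⟩
    simp only []
    rw [dif_pos a.2]
    conv_lhs => rw [show (⟨a.1, a.2⟩ : {x // x ∈ hA.toFinset}) = a from rfl, ha]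

lemma ncard_Icc' (a b : ℕ) : (Set.Icc a b).ncard = b + 1 - a := by
  rw [← Finset.coe_Icc, Set.ncard_coe_finset, Nat.card_Icc]

lemma aux_main (n : ℕ) (M : Matroid ℕ) (hE : M.E = Set.Icc 1 n) (hrk : RankEq M 2)
    (e : ℕ) (he : M.Indep {e})
    (hP3 : ∀ u v, u ≠ v → M.Indep {u} → M.Indep {v} →
      u ∉ M.closure {e} → v ∉ M.closure {e} → M.Indep {u, v}) :
    ∃ a b, 1 ≤ a ∧ a < b ∧ b ≤ n ∧
      ∃ N : Matroid ℕ, IsSchubert2 n a b N ∧ MatroidIso M N := by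
  classical
  have hEfin : M.E.Finite := by rw [hE]; exact Set.finite_Icc 1 n
  set P := M.closure {e} with hPdef
  set L := M.closure ∅ with hLdef
  have hPE : P ⊆ M.E := M.closure_subset_ground _
  have hLP : L ⊆ P := M.closure_subset_closure (Set.empty_subset _)
  have hLE : L ⊆ M.E := M.closure_subset_ground _
  set A3 := L with hA3
  set A2 := P \ L with hA2
  set A1 := M.E \ P with hA1
  have heE : e ∈ M.E := he.subset_ground rfl
  have heA2 : e ∈ A2 := ⟨M.mem_closure_self e heE, (nonloop_iff.mp he).2⟩
  have hnlA : ∀ x, x ∈ A2 ∪ A1 → M.Indep {x} := by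
    intro x hx
    rcases hx with hx | hx
    · exact nonloop_iff.mpr ⟨hPE hx.1, hx.2⟩
    · exact nonloop_iff.mpr ⟨hx.1, fun h => hx.2 (hLP h)⟩
  have hclass : ∀ x, M.Indep {x} → x ∈ A2 ∨ x ∈ A1 := by
    intro x hx
    have hxE := hx.subset_ground rfl
    by_cases hxP : x ∈ P
    · exact Or.inl ⟨hxP, (nonloop_iff.mp hx).2⟩
    · exact Or.inr ⟨hxE, hxP⟩
  have hP5 : ∀ u v, u ∈ A2 → v ∈ A2 → u ≠ v → ¬ M.Indep {u, v} := by
    intro u v hu hv huv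
    have hunl := hnlA u (Or.inl hu)
    have hvnl := hnlA v (Or.inl hv)
    have hvP : v ∈ M.closure {u} := by
      by_cases hue : u = e
      · exact hue ▸ hv.1
      · have hecu : e ∈ M.closure {u} := mem_closure_swap hunl hu.1
        exact M.closure_subset_closure_of_subset_closure (by simpa using hecu) hv.1
    intro hI
    exact ((pair_indep_iff hvnl huv).mp hI).2 (mem_closure_swap hvnl hvP)
  have hP4 : ∀ u v, u ∈ A2 → v ∈ A1 → M.Indep {u, v} := by
    intro u v hu hv
    have hunl := hnlA u (Or.inl hu)
    have hne : u ≠ v := fun h => hv.2 (h ▸ hu.1)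
    rw [Set.pair_comm, pair_indep_iff hunl hne.symm]
    refine ⟨hv.1, fun hcl => hv.2 ?_⟩
    exact M.closure_subset_closure_of_subset_closure (by simpa using hu.1) hcl
  have hbase : ∀ B, M.IsBase B ↔ M.Indep B ∧ B.ncard = 2 := by
    intro B
    constructor
    · intro h; exact ⟨h.indep, hrk B h⟩
    · rintro ⟨hI, hcard⟩
      obtain ⟨B', hB', hBB'⟩ := hI.exists_isBase_superset
      have hcard' : B'.ncard ≤ B.ncard := by rw [hrk B' hB', hcard]
      have hBeq : B = B' :=
        Set.eq_of_subset_of_ncard_le hBB' hcard' (hEfin.subset hB'.subset_ground)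
      rwa [hBeq]
  obtain ⟨B0, hB0⟩ := M.exists_isBase
  obtain ⟨x0, y0, hne0, hB0eq⟩ := Set.ncard_eq_two.mp (hrk _ hB0)
  have hI0 : M.Indep {x0, y0} := hB0eq ▸ hB0.indep
  have hx0 : M.Indep {x0} := hI0.subset (by simp)
  have hy0 : M.Indep {y0} := hI0.subset (by simp)
  have hA1ne : A1.Nonempty := by
    rcases hclass x0 hx0 with h1 | h1
    · rcases hclass y0 hy0 with h2 | h2
      · exact absurd hI0 (hP5 _ _ h1 h2 hne0)
      · exact ⟨y0, h2⟩
    · exact ⟨x0, h1⟩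
  set l := A3.ncard with hl
  set p := A2.ncard with hp
  set s := A1.ncard with hs
  have hfin3 : A3.Finite := hEfin.subset hLE
  have hfin2 : A2.Finite := hEfin.subset (fun x hx => hPE hx.1)
  have hfin1 : A1.Finite := hEfin.subset (fun x hx => hx.1)
  have hd32 : Disjoint A3 A2 := Set.disjoint_sdiff_right
  have hUnion32 : A3 ∪ A2 = P := Set.union_diff_cancel hLP
  have hUnionE : A3 ∪ A2 ∪ A1 = M.E := by rw [hUnion32]; exact Set.union_diff_cancel hPE
  have hd321 : Disjoint (A3 ∪ A2) A1 := by rw [hUnion32]; exact Set.disjoint_sdiff_right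
  have hsum : l + p + s = n := by
    have h1 : (A3 ∪ A2 ∪ A1).ncard = (A3 ∪ A2).ncard + s :=
      Set.ncard_union_eq hd321 (hfin3.union hfin2) hfin1
    have h2 : (A3 ∪ A2).ncard = l + p := Set.ncard_union_eq hd32 hfin3 hfin2
    have h3 : M.E.ncard = n := by rw [hE, ncard_Icc']; omega
    rw [hUnionE, h3, h2] at h1
    omega
  have hp1 : 1 ≤ p := (Set.ncard_pos hfin2).mpr ⟨e, heA2⟩
  have hs1 : 1 ≤ s := (Set.ncard_pos hfin1).mpr hA1ne
  set I3 := Set.Icc 1 l with hI3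
  set I2 := Set.Icc (l + 1) (l + p) with hI2
  set I1 := Set.Icc (l + p + 1) n with hI1
  obtain ⟨f3, hf3⟩ := exists_bijOn (B := I3) hfin3 (Set.finite_Icc _ _) (by rw [ncard_Icc']; omega)
  obtain ⟨f2, hf2⟩ := exists_bijOn (B := I2) hfin2 (Set.finite_Icc _ _) (by rw [ncard_Icc']; omega)
  obtain ⟨f1, hf1⟩ := exists_bijOn (B := I1) hfin1 (Set.finite_Icc _ _) (by rw [ncard_Icc']; omega)
  set f : ℕ → ℕ := fun x => if x ∈ A3 then f3 x else if x ∈ P then f2 x else f1 x with hfdef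
  have hb3 : Set.BijOn f A3 I3 := hf3.congr (fun x hx => by
    simp only [hfdef]; rw [if_pos hx])
  have hb2 : Set.BijOn f A2 I2 := hf2.congr (fun x hx => by
    have h3 : x ∉ A3 := hx.2
    simp only [hfdef]; rw [if_neg h3, if_pos hx.1])
  have hb1 : Set.BijOn f A1 I1 := hf1.congr (fun x hx => by
    have h3 : x ∉ A3 := fun h => hx.2 (hLP h)
    simp only [hfdef]; rw [if_neg h3, if_neg hx.2])
  have hinj32 : Set.InjOn f (A3 ∪ A2) := by
    rw [Set.injOn_union hd32]
    refine ⟨hb3.injOn, hb2.injOn, fun x hx y hy => ?_⟩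
    have h1 := (Set.mem_Icc.mp (hb3.mapsTo hx)).2
    have h2 := (Set.mem_Icc.mp (hb2.mapsTo hy)).1
    omega
  have hb32 : Set.BijOn f (A3 ∪ A2) (I3 ∪ I2) := hb3.union hb2 hinj32
  have hinjE : Set.InjOn f (A3 ∪ A2 ∪ A1) := by
    rw [Set.injOn_union hd321]
    refine ⟨hinj32, hb1.injOn, fun x hx y hy => ?_⟩
    have h1 : f x ≤ l + p := by
      rcases hb32.mapsTo hx with h | h
      · have := (Set.mem_Icc.mp h).2; omega
      · exact (Set.mem_Icc.mp h).2
    have h2 := (Set.mem_Icc.mp (hb1.mapsTo hy)).1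
    omega
  have hbE : Set.BijOn f M.E (Set.Icc 1 n) := by
    have hII : I3 ∪ I2 ∪ I1 = Set.Icc 1 n := by
      ext x
      simp only [hI3, hI2, hI1, Set.mem_union, Set.mem_Icc]
      omega
    rw [← hUnionE, ← hII]
    exact hb32.union hb1 hinjE
  refine ⟨l + 1, l + p + 1, ?_, ?_, ?_, M.map f hbE.injOn, ⟨?_, ?_⟩, ?_⟩
  · omega
  · omega
  · omega
  · rw [Matroid.map_ground, hbE.image_eq]
  · intro B
    rw [Matroid.map_isBase_iff]
    constructor
    · rintro ⟨B₀, hB₀, rfl⟩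
      obtain ⟨x, y, hxy, hB₀eq⟩ := Set.ncard_eq_two.mp (hrk _ hB₀)
      subst hB₀eq
      have hIxy : M.Indep {x, y} := hB₀.indep
      have hx : M.Indep {x} := hIxy.subset (by simp)
      have hy : M.Indep {y} := hIxy.subset (by simp)
      have himg : f '' ({x, y} : Set ℕ) = {f x, f y} := Set.image_pair f x y
      rcases hclass x hx with h1 | h1 <;> rcases hclass y hy with h2 | h2
      · exact absurd hIxy (hP5 _ _ h1 h2 hxy)
      · have hfx := Set.mem_Icc.mp (hb2.mapsTo h1)
        have hfy := Set.mem_Icc.mp (hb1.mapsTo h2)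
        exact ⟨f x, f y, by omega, by omega, by omega, by omega, by omega, himg⟩
      · have hfx := Set.mem_Icc.mp (hb1.mapsTo h1)
        have hfy := Set.mem_Icc.mp (hb2.mapsTo h2)
        exact ⟨f y, f x, by omega, by omega, by omega, by omega, by omega,
          by rw [himg, Set.pair_comm]⟩
      · have hfx := Set.mem_Icc.mp (hb1.mapsTo h1)
        have hfy := Set.mem_Icc.mp (hb1.mapsTo h2)
        have hfne : f x ≠ f y := fun h => hxy (hb1.injOn h1 h2 h)
        rcases Nat.lt_or_ge (f x) (f y) with hlt | hge
        · exact ⟨f x, f y, hlt, by omega, by omega, by omega, by omega, himg⟩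
        · exact ⟨f y, f x, by omega, by omega, by omega, by omega, by omega,
            by rw [himg, Set.pair_comm]⟩
    · rintro ⟨i, j, hij, hai, hbj, h1i, hjn, rfl⟩
      have hjI : j ∈ I1 := Set.mem_Icc.mpr ⟨hbj, hjn⟩
      obtain ⟨y, hy1, hfy⟩ := hb1.surjOn hjI
      by_cases hiI : i ≤ l + p
      · have hiI2 : i ∈ I2 := Set.mem_Icc.mpr ⟨hai, hiI⟩
        obtain ⟨x, hx2, hfx⟩ := hb2.surjOn hiI2
        have hIxy : M.Indep {x, y} := hP4 x y hx2 hy1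
        have hxyne : x ≠ y := fun h => hy1.2 (h ▸ hx2.1)
        refine ⟨{x, y}, (hbase _).mpr ⟨hIxy, Set.ncard_pair hxyne⟩, ?_⟩
        rw [Set.image_pair, hfx, hfy]
      · have hiI1 : i ∈ I1 := Set.mem_Icc.mpr ⟨by omega, by omega⟩
        obtain ⟨x, hx1, hfx⟩ := hb1.surjOn hiI1
        have hxyne : x ≠ y := fun h => (by omega : i ≠ j) (by rw [← hfx, ← hfy, h])
        have hIxy : M.Indep {x, y} :=
          hP3 x y hxyne (hnlA _ (Or.inr hx1)) (hnlA _ (Or.inr hy1)) hx1.2 hy1.2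
        refine ⟨{x, y}, (hbase _).mpr ⟨hIxy, Set.ncard_pair hxyne⟩, ?_⟩
        rw [Set.image_pair, hfx, hfy]
  · refine ⟨f, ?_, ?_⟩
    · rw [Matroid.map_ground]
      exact hbE.injOn.bijOn_image
    · intro B hB
      constructor
      · intro h
        exact (Matroid.map_isBase_iff M f hbE.injOn).mpr ⟨B, h, rfl⟩
      · intro h
        obtain ⟨B₀, hB₀, hBeq⟩ := (Matroid.map_isBase_iff M f hbE.injOn).mp h
        have hBB : B = B₀ :=
          (hbE.injOn.image_eq_image_iff hB hB₀.subset_ground).mp hBeq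
        rwa [hBB]

end PaperPOAM
end Helpers



namespace PaperPOAM

/-- a rank-2 matroid on `{1,…,n}` whose cyclic flats form a chain under
inclusion is isomorphic to a rank-2 Schubert matroid `S(a,b)` for some `1 ≤ a < b ≤ n`. -/
theorem statement_16 (n : ℕ) (M : Matroid ℕ) (hE : M.E = Set.Icc 1 n)
    (hrk : RankEq M 2)
    (hchain : ∀ F G, IsCyclicFlat M F → IsCyclicFlat M G → F ⊆ G ∨ G ⊆ F) :
    ∃ a b, 1 ≤ a ∧ a < b ∧ b ≤ n ∧
      ∃ N : Matroid ℕ, IsSchubert2 n a b N ∧ MatroidIso M N := by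
  classical
  by_cases hbig : ∃ x y, x ≠ y ∧ M.Indep {x} ∧ M.Indep {y} ∧ y ∈ M.closure {x}
  · obtain ⟨x, x', hne, hx, hx', hpar⟩ := hbig
    refine aux_main n M hE hrk x hx ?_
    intro u v huv hu hv huP hvP
    by_contra hI
    have hucl : u ∈ M.closure {v} := by
      by_contra hno
      exact hI ((pair_indep_iff hv huv).mpr ⟨hu.subset_ground rfl, hno⟩)
    have hcf1 := closure_cyclic hv hu huv.symm hucl
    have hcf2 := closure_cyclic hx hx' hne hpar
    rcases hchain _ _ hcf1 hcf2 with hsub | hsub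
    · exact hvP (hsub (M.mem_closure_self v (hv.subset_ground rfl)))
    · have hx_in : x ∈ M.closure {v} := hsub (M.mem_closure_self x (hx.subset_ground rfl))
      exact hvP (mem_closure_swap hx hx_in)
  · obtain ⟨B0, hB0⟩ := M.exists_isBase
    obtain ⟨x0, y0, hne0, hB0eq⟩ := Set.ncard_eq_two.mp (hrk _ hB0)
    have hI0 : M.Indep {x0, y0} := hB0eq ▸ hB0.indep
    have hx0 : M.Indep {x0} := hI0.subset (by simp)
    refine aux_main n M hE hrk x0 hx0 ?_
    intro u v huv hu hv _ _
    by_contra hI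
    have hucl : u ∈ M.closure {v} := by
      by_contra hno
      exact hI ((pair_indep_iff hv huv).mpr ⟨hu.subset_ground rfl, hno⟩)
    exact hbig ⟨v, u, huv.symm, hv, hu, hucl⟩


end PaperPOAM
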